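/- Let α, λ, h > 0 and L ≥ 0. The minimum of f(u) = α u³ + λ (L - u)³ / h over u ∈ [0, L] equals α L³ (1 + √(α h / λ))^{-2}. -/

import Mathlib

theorem stmt_2 (α lam h L : ℝ) (hα : 0 < α) (hlam : 0 < lam) (hh : 0 < h) (hL : 0 ≤ L) :
    IsLeast ((fun u : ℝ => α * u ^ 3 + lam * (L - u) ^ 3 / h) '' Set.Icc 0 L)
      (α * L ^ 3 / (1 + Real.sqrt (α * h / lam)) ^ 2) := by
  set s := Real.sqrt (α * h / lam) with hsdef
  have hs0 : 0 ≤ s := Real.sqrt_nonneg _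
  have hs2 : s ^ 2 = α * h / lam := Real.sq_sqrt (by positivity)
  have hs' : lam * s ^ 2 = α * h := by
    rw [hs2]; field_simp
  have h1s : (0:ℝ) < 1 + s := by linarith
  constructor
  · refine ⟨L / (1 + s), ⟨by positivity, ?_⟩, ?_⟩
    · rw [div_le_iff₀ h1s]; nlinarith
    · show α * (L / (1 + s)) ^ 3 + lam * (L - L / (1 + s)) ^ 3 / h
          = α * L ^ 3 / (1 + s) ^ 2
      field_simp
      linear_combination (L ^ 3 * (1 + s) ^ 2 * s + L ^ 3 * s ^ 2 * (3 + 9*s + 10*s^2 + 5*s^3 + s^4) - L ^ 3 * s ^ 2 * (5 + 10*s + 10*s^2 + 5*s^3 + s^4)) * hs'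
  · rintro y ⟨u, ⟨hu0, huL⟩, rfl⟩
    show α * L ^ 3 / (1 + s) ^ 2 ≤ α * u ^ 3 + lam * (L - u) ^ 3 / h
    have hLu : 0 ≤ L - u := by linarith
    have id1 : (s ^ 2 * u ^ 3 + (L - u) ^ 3) * (1 + s) ^ 3 - s ^ 2 * L ^ 3 * (1 + s)
        = ((1 + s) * u - L) ^ 2
          * (s ^ 2 * ((1 + s) * u + 2 * L) + (1 + s) * (L - u) + 2 * L * s) := by
      ring
    have hpos : 0 ≤ ((1 + s) * u - L) ^ 2
          * (s ^ 2 * ((1 + s) * u + 2 * L) + (1 + s) * (L - u) + 2 * L * s) := by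
      apply mul_nonneg (sq_nonneg _)
      have : 0 ≤ s ^ 2 * ((1 + s) * u + 2 * L) := by positivity
      nlinarith [mul_nonneg h1s.le hLu, mul_nonneg hL hs0]
    have key : s ^ 2 * L ^ 3 * (1 + s) ≤ ((s ^ 2 * u ^ 3 + (L - u) ^ 3) * (1 + s) ^ 2) * (1 + s) := by
      nlinarith [id1, hpos]
    have key' : s ^ 2 * L ^ 3 ≤ (s ^ 2 * u ^ 3 + (L - u) ^ 3) * (1 + s) ^ 2 :=
      le_of_mul_le_mul_right key h1s
    have expand : α * u ^ 3 + lam * (L - u) ^ 3 / h = (α * u ^ 3 * h + lam * (L - u) ^ 3) / h := by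
      field_simp
    rw [expand, div_le_div_iff₀ (by positivity) hh]
    have e1 : α * L ^ 3 * h = lam * (s ^ 2 * L ^ 3) := by linear_combination (-(L ^ 3)) * hs'
    have e2 : lam * ((s ^ 2 * u ^ 3 + (L - u) ^ 3) * (1 + s) ^ 2)
        = (α * u ^ 3 * h + lam * (L - u) ^ 3) * (1 + s) ^ 2 := by
      linear_combination u ^ 3 * (1 + s) ^ 2 * hs'
    have := mul_le_mul_of_nonneg_left key' hlam.le
    linarith
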